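/- Let k be a field and k((t)) the Laurent series field (HahnSeries ℤ k). Let a, b ∈ k((t)) with b.coeff q = 0 for all q ≤ 0 (i.e. b lies in the maximal ideal). Then the set S_{a,b} = { β ∈ k : res( a · (1 − b·C β)⁻¹ ) = 0 } is either finite or equal to all of k, where res(z) = z.coeff 0 and C : k → k((t)) is the constant embedding. -/

import Mathlib

open HahnSeries Polynomial Finset

private lemma coeff_sum' {k : Type*} [Field k] (f : ℕ → HahnSeries ℤ k) (s : Finset ℕ)
    (q : ℤ) : (∑ i ∈ s, f i).coeff q = ∑ i ∈ s, (f i).coeff q := by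
  classical
  induction s using Finset.induction with
  | empty => simp
  | insert _ _ h ih => simp [Finset.sum_insert h, HahnSeries.coeff_add, ih]

private lemma order_nonneg_of_coeff {k : Type*} [Field k] {x : HahnSeries ℤ k}
    (h : ∀ q : ℤ, q < 0 → x.coeff q = 0) (hx : x ≠ 0) : 0 ≤ x.order := by
  by_contra h'
  exact (mt HahnSeries.coeff_order_eq_zero.mp hx) (h _ (lt_of_not_ge h'))

/-- in k((t)) = HahnSeries ℤ k, if b lies in the maximal ideal, then the set
    S_{a,b} = {β ∈ k : res(a/(1 − b·C β)) = 0} is either finite or all of k. -/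
theorem stmt_11 {k : Type*} [Field k] (a b : HahnSeries ℤ k)
    (hb : ∀ q : ℤ, q ≤ 0 → b.coeff q = 0) :
    {β : k | (a * (1 - b * HahnSeries.C β)⁻¹).coeff 0 = 0}.Finite ∨
      {β : k | (a * (1 - b * HahnSeries.C β)⁻¹).coeff 0 = 0} = Set.univ := by
  by_cases ha : a = 0
  · right; ext β; simp [ha]
  by_cases hbz : b = 0
  · by_cases ha0 : a.coeff 0 = 0
    · right; ext β; simp [hbz, ha0]
    · left
      have : {β : k | (a * (1 - b * HahnSeries.C β)⁻¹).coeff 0 = 0} = ∅ := by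
        ext β; simp [hbz, ha0]
      rw [this]; exact Set.finite_empty
  -- main case
  have hbord : 1 ≤ b.order := by
    by_contra h'
    exact (mt HahnSeries.coeff_order_eq_zero.mp hbz) (hb _ (by omega))
  set d : ℤ := a.order with hd
  set M : ℕ := (1 - d).toNat with hM
  have hdM : 1 ≤ d + (M : ℤ) := by omega
  set c : ℕ → k := fun i => (a * b ^ i).coeff 0 with hc
  set p : Polynomial k := ∑ i ∈ Finset.range M, Polynomial.C (c i) * Polynomial.X ^ i with hp
  have key : ∀ β : k, (a * (1 - b * HahnSeries.C β)⁻¹).coeff 0 = p.eval β := by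
    intro β
    set y : HahnSeries ℤ k := b * HahnSeries.C β with hy
    have hycoeff : ∀ q : ℤ, q ≤ 0 → y.coeff q = 0 := by
      intro q hq
      simp [hy, HahnSeries.C_apply, HahnSeries.coeff_mul_single_zero, hb q hq]
    set u : HahnSeries ℤ k := 1 - y with hu
    have hu0 : u.coeff 0 = 1 := by
      simp [hu, HahnSeries.coeff_sub, hycoeff 0 le_rfl]
    have hune : u ≠ 0 := fun h => by simp [h] at hu0
    have huneg : ∀ q : ℤ, q < 0 → u.coeff q = 0 := by
      intro q hq
      simp only [hu, HahnSeries.coeff_sub, hycoeff q hq.le, sub_zero, HahnSeries.coeff_one]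
      rw [if_neg (show ¬ q = 0 by omega)]
    have huord : u.order = 0 :=
      le_antisymm (HahnSeries.order_le_of_coeff_ne_zero (by rw [hu0]; exact one_ne_zero))
        (order_nonneg_of_coeff huneg hune)
    have huinv : u * u⁻¹ = 1 := mul_inv_cancel₀ hune
    have huinvne : u⁻¹ ≠ 0 := inv_ne_zero hune
    have huinvord : u⁻¹.order = 0 := by
      have := HahnSeries.order_mul hune huinvne
      rw [huinv, HahnSeries.order_one, huord, zero_add] at this
      omega
    set S : HahnSeries ℤ k := ∑ i ∈ Finset.range M, y ^ i with hS
    have h1 : u * S = 1 - y ^ M := by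
      have := geom_sum_mul y M
      rw [hu, hS]; linear_combination -this
    have keyid : a * u⁻¹ = a * S + a * y ^ M * u⁻¹ := by
      linear_combination (-(a * u⁻¹)) * h1 + (a * S) * huinv
    -- tail term vanishes
    have hyM : y ^ M = b ^ M * HahnSeries.C (β ^ M) := by
      rw [hy, mul_pow, map_pow]
    have htail : (a * y ^ M * u⁻¹).coeff 0 = 0 := by
      rw [hyM]
      have hre : a * (b ^ M * HahnSeries.C (β ^ M)) * u⁻¹
          = a * b ^ M * u⁻¹ * HahnSeries.C (β ^ M) := by ring
      rw [hre, HahnSeries.C_apply, HahnSeries.coeff_mul_single_zero]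
      have habM : a * b ^ M ≠ 0 := mul_ne_zero ha (pow_ne_zero _ hbz)
      have hordab : (0 : ℤ) < (a * b ^ M * u⁻¹).order := by
        rw [HahnSeries.order_mul habM huinvne, huinvord,
          HahnSeries.order_mul ha (pow_ne_zero _ hbz), HahnSeries.order_pow]
        have : (M : ℤ) * 1 ≤ M • b.order := by
          rw [nsmul_eq_mul]
          exact mul_le_mul_of_nonneg_left hbord (by positivity)
        omega
      rw [HahnSeries.coeff_eq_zero_of_lt_order hordab, zero_mul]
    have hhead : (a * S).coeff 0 = ∑ i ∈ Finset.range M, c i * β ^ i := by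
      rw [hS, Finset.mul_sum]
      rw [coeff_sum']
      apply Finset.sum_congr rfl
      intro i _
      have : y ^ i = b ^ i * HahnSeries.C (β ^ i) := by rw [hy, mul_pow, map_pow]
      rw [this, ← mul_assoc, HahnSeries.C_apply, HahnSeries.coeff_mul_single_zero, hc]
    rw [keyid, HahnSeries.coeff_add, htail, add_zero, hhead, hp]
    simp [Polynomial.eval_finset_sum]
  by_cases hpz : p = 0
  · right
    apply Set.eq_univ_of_forall
    intro β
    simp only [Set.mem_setOf_eq, key β, hpz, Polynomial.eval_zero]
  · left
    have hsub : {β : k | (a * (1 - b * HahnSeries.C β)⁻¹).coeff 0 = 0}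
        ⊆ {β : k | p.IsRoot β} := by
      intro β hβ
      simp only [Set.mem_setOf_eq] at hβ ⊢
      rw [Polynomial.IsRoot, ← key β, hβ]
    exact (Polynomial.finite_setOf_isRoot hpz).subset hsub
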